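/- Let S be a finite set of unit vectors in ℝ^n such that the inner products ⟨u, v⟩ for distinct u, v ∈ S take at most t distinct values b_1, …, b_t, all different from 1. For each u ∈ S define the polynomial F_u(x) := ∏_{i=1}^t (⟨u, x⟩ − b_i) on ℝ^n. Then {F_u : u ∈ S} is a linearly independent set of polynomials of degree at most t, and restricted to the sphere ‖x‖ = 1 each F_u lies in a space of dimension C(n + t − 1, n − 1) + C(n + t − 2, n − 1); hence |S| ≤ C(n + t − 1, n − 1) + C(n + t − 2, n − 1). -/

import Mathlib

open Real
open scoped RealInnerProductSpace

private def stmt14mon (n : ℕ) (μ : Fin n → ℕ) :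
    (Metric.sphere (0 : EuclideanSpace ℝ (Fin n)) 1) → ℝ :=
  fun x => ∏ j, ((x : EuclideanSpace ℝ (Fin n)) j) ^ μ j

private lemma stmt14_sum_sq (n : ℕ) (x : Metric.sphere (0 : EuclideanSpace ℝ (Fin n)) 1) :
    ∑ j, ((x : EuclideanSpace ℝ (Fin n)) j) ^ 2 = 1 := by
  have hx : ‖(x : EuclideanSpace ℝ (Fin n))‖ = 1 := by
    exact mem_sphere_zero_iff_norm.1 x.2
  have h : ⟪(x : EuclideanSpace ℝ (Fin n)), (x : EuclideanSpace ℝ (Fin n))⟫ = 1 := by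
    rw [real_inner_self_eq_norm_sq, hx]; norm_num
  rw [PiLp.inner_apply] at h
  simpa [RCLike.inner_apply, sq] using h

private lemma stmt14_step (n : ℕ) (μ : Fin n → ℕ) :
    stmt14mon n μ = ∑ j : Fin n, stmt14mon n (fun k => μ k + if k = j then 2 else 0) := by
  funext x
  have hs := stmt14_sum_sq n x
  simp only [stmt14mon, Finset.sum_apply]
  have h1 : ∀ j : Fin n,
      ∏ k, ((x : EuclideanSpace ℝ (Fin n)) k) ^ (μ k + if k = j then 2 else 0)
        = ((x : EuclideanSpace ℝ (Fin n)) j) ^ 2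
          * ∏ k, ((x : EuclideanSpace ℝ (Fin n)) k) ^ μ k := by
    intro j
    rw [show (∏ k, ((x : EuclideanSpace ℝ (Fin n)) k) ^ (μ k + if k = j then 2 else 0))
        = ∏ k, (((x : EuclideanSpace ℝ (Fin n)) k) ^ μ k
            * ((x : EuclideanSpace ℝ (Fin n)) k) ^ (if k = j then 2 else 0)) from
      Finset.prod_congr rfl fun k _ => pow_add _ _ _]
    rw [Finset.prod_mul_distrib]
    rw [show (∏ k, ((x : EuclideanSpace ℝ (Fin n)) k) ^ (if k = j then 2 else 0))
        = ((x : EuclideanSpace ℝ (Fin n)) j) ^ 2 by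
      simp [pow_ite]]
    ring
  simp only [h1]
  rw [← Finset.sum_mul, hs, one_mul]

private lemma stmt14_mem (n t : ℕ)
    (W : Submodule ℝ ((Metric.sphere (0 : EuclideanSpace ℝ (Fin n)) 1) → ℝ))
    (hgen : ∀ μ : Fin n → ℕ, (∑ j, μ j = t ∨ (1 ≤ t ∧ ∑ j, μ j = t - 1)) →
      stmt14mon n μ ∈ W) :
    ∀ g (μ : Fin n → ℕ), (∑ j, μ j + 2 * g = t ∨ (1 ≤ t ∧ ∑ j, μ j + 2 * g = t - 1)) →
      stmt14mon n μ ∈ W := by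
  intro g
  induction g with
  | zero => intro μ h; exact hgen μ (by omega)
  | succ g ih =>
    intro μ h
    rw [stmt14_step n μ]
    refine Submodule.sum_mem _ fun j _ => ih _ ?_
    have hd : ∑ k, (μ k + if k = j then 2 else 0) = (∑ k, μ k) + 2 := by
      rw [Finset.sum_add_distrib]
      simp
    omega

private lemma stmt14_mem_le (n t : ℕ)
    (W : Submodule ℝ ((Metric.sphere (0 : EuclideanSpace ℝ (Fin n)) 1) → ℝ))
    (hgen : ∀ μ : Fin n → ℕ, (∑ j, μ j = t ∨ (1 ≤ t ∧ ∑ j, μ j = t - 1)) →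
      stmt14mon n μ ∈ W)
    (μ : Fin n → ℕ) (hμ : ∑ j, μ j ≤ t) : stmt14mon n μ ∈ W := by
  rcases Nat.even_or_odd (t - ∑ j, μ j) with ⟨g, hg⟩ | ⟨g, hg⟩
  · exact stmt14_mem n t W hgen g μ (by omega)
  · exact stmt14_mem n t W hgen g μ (by omega)

private lemma stmt14_poly (n t : ℕ)
    (W : Submodule ℝ ((Metric.sphere (0 : EuclideanSpace ℝ (Fin n)) 1) → ℝ))
    (hgen : ∀ μ : Fin n → ℕ, (∑ j, μ j = t ∨ (1 ≤ t ∧ ∑ j, μ j = t - 1)) →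
      stmt14mon n μ ∈ W)
    (p : MvPolynomial (Fin n) ℝ) (hp : p.totalDegree ≤ t) :
    (fun x : Metric.sphere (0 : EuclideanSpace ℝ (Fin n)) 1 =>
      MvPolynomial.eval (fun i => (x : EuclideanSpace ℝ (Fin n)) i) p) ∈ W := by
  have heq : (fun x : Metric.sphere (0 : EuclideanSpace ℝ (Fin n)) 1 =>
      MvPolynomial.eval (fun i => (x : EuclideanSpace ℝ (Fin n)) i) p)
      = ∑ d ∈ p.support, MvPolynomial.coeff d p • stmt14mon n ⇑d := by
    funext x
    rw [MvPolynomial.eval_eq']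
    simp [stmt14mon, Finset.sum_apply]
  rw [heq]
  refine Submodule.sum_mem _ fun d hd => Submodule.smul_mem _ _ ?_
  refine stmt14_mem_le n t W hgen ⇑d ?_
  have h1 : (d.sum fun _ e => e) ≤ p.totalDegree := MvPolynomial.le_totalDegree hd
  have h2 : (d.sum fun _ e => e) = ∑ j, d j := Finsupp.sum_fintype _ _ fun _ => rfl
  omega

theorem stmt14 (n t : ℕ) (S : Finset (EuclideanSpace ℝ (Fin n)))
    (hunit : ∀ u ∈ S, ‖u‖ = 1)
    (b : Fin t → ℝ) (hb : ∀ i, b i ≠ 1)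
    (hdist : ∀ u ∈ S, ∀ v ∈ S, u ≠ v → ∃ i, ⟪u, v⟫ = b i) :
    LinearIndependent ℝ (fun u : S =>
      (fun x : Metric.sphere (0 : EuclideanSpace ℝ (Fin n)) 1 =>
        ∏ i, (⟪(u : EuclideanSpace ℝ (Fin n)), (x : EuclideanSpace ℝ (Fin n))⟫ - b i))) ∧
    (∀ u ∈ S, ∃ p : MvPolynomial (Fin n) ℝ, p.totalDegree ≤ t ∧
      ∀ x : EuclideanSpace ℝ (Fin n),
        MvPolynomial.eval (fun i => x i) p = ∏ i, (⟪u, x⟫ - b i)) ∧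
    (∃ W : Submodule ℝ ((Metric.sphere (0 : EuclideanSpace ℝ (Fin n)) 1) → ℝ),
      Module.finrank ℝ W ≤ (n + t - 1).choose (n - 1) + (n + t - 2).choose (n - 1) ∧
      ∀ u ∈ S, (fun x : Metric.sphere (0 : EuclideanSpace ℝ (Fin n)) 1 =>
        ∏ i, (⟪u, (x : EuclideanSpace ℝ (Fin n))⟫ - b i)) ∈ W) ∧
    S.card ≤ (n + t - 1).choose (n - 1) + (n + t - 2).choose (n - 1) := by
  classical
  have hmemS : ∀ u ∈ S, u ∈ Metric.sphere (0 : EuclideanSpace ℝ (Fin n)) 1 := fun u hu =>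
    mem_sphere_zero_iff_norm.2 (hunit u hu)
  have hself : ∀ u ∈ S, ⟪u, u⟫ = 1 := fun u hu => by
    rw [real_inner_self_eq_norm_sq, hunit u hu]; norm_num
  -- Part 1 : linear independence
  have li : LinearIndependent ℝ (fun u : S =>
      (fun x : Metric.sphere (0 : EuclideanSpace ℝ (Fin n)) 1 =>
        ∏ i, (⟪(u : EuclideanSpace ℝ (Fin n)), (x : EuclideanSpace ℝ (Fin n))⟫ - b i))) := by
    rw [Fintype.linearIndependent_iff]
    intro g hg u
    have hgu := congrFun hg (⟨(u : EuclideanSpace ℝ (Fin n)), hmemS u u.2⟩ :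
      Metric.sphere (0 : EuclideanSpace ℝ (Fin n)) 1)
    simp only [Finset.sum_apply, Pi.smul_apply, smul_eq_mul, Pi.zero_apply] at hgu
    rw [Finset.sum_eq_single u] at hgu
    · have hprod : (∏ i, (⟪(u : EuclideanSpace ℝ (Fin n)), (u : EuclideanSpace ℝ (Fin n))⟫
          - b i)) ≠ 0 := by
        rw [hself u u.2]
        exact Finset.prod_ne_zero_iff.2 fun i _ => sub_ne_zero_of_ne (Ne.symm (hb i))
      exact (mul_eq_zero.1 hgu).resolve_right hprod
    · intro v _ hvu
      obtain ⟨i, hi⟩ := hdist (v : EuclideanSpace ℝ (Fin n)) v.2 (u : EuclideanSpace ℝ (Fin n))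
        u.2 (fun h => hvu (Subtype.ext h))
      refine mul_eq_zero_of_right _ (Finset.prod_eq_zero (Finset.mem_univ i) ?_)
      rw [hi, sub_self]
    · intro h; exact absurd (Finset.mem_univ u) h
  -- Part 2 : polynomials
  have part2 : ∀ u ∈ S, ∃ p : MvPolynomial (Fin n) ℝ, p.totalDegree ≤ t ∧
      ∀ x : EuclideanSpace ℝ (Fin n),
        MvPolynomial.eval (fun i => x i) p = ∏ i, (⟪u, x⟫ - b i) := by
    intro u _
    refine ⟨∏ i, ((∑ j, MvPolynomial.C (u j) * MvPolynomial.X j) - MvPolynomial.C (b i)),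
      ?_, ?_⟩
    · refine (MvPolynomial.totalDegree_finset_prod _ _).trans ?_
      have h1 : ∀ i : Fin t, ((∑ j, MvPolynomial.C (u j) * MvPolynomial.X j :
          MvPolynomial (Fin n) ℝ) - MvPolynomial.C (b i)).totalDegree ≤ 1 := by
        intro i
        refine le_trans (MvPolynomial.totalDegree_sub _ _) (max_le ?_ ?_)
        · refine (MvPolynomial.totalDegree_finset_sum _ _).trans
            (Finset.sup_le fun j _ => ?_)
          refine (MvPolynomial.totalDegree_mul _ _).trans ?_
          simp [MvPolynomial.totalDegree_C, MvPolynomial.totalDegree_X]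
        · simp [MvPolynomial.totalDegree_C]
      refine le_trans (Finset.sum_le_sum fun i _ => h1 i) (by simp)
    · intro x
      rw [map_prod]
      refine Finset.prod_congr rfl fun i _ => ?_
      rw [map_sub, map_sum]
      simp [MvPolynomial.eval_C, MvPolynomial.eval_X, PiLp.inner_apply, RCLike.inner_apply, mul_comm]
  -- Part 3 : the space W
  have part3 : ∃ W : Submodule ℝ ((Metric.sphere (0 : EuclideanSpace ℝ (Fin n)) 1) → ℝ),
      FiniteDimensional ℝ W ∧
      Module.finrank ℝ W ≤ (n + t - 1).choose (n - 1) + (n + t - 2).choose (n - 1) ∧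
      ∀ u ∈ S, (fun x : Metric.sphere (0 : EuclideanSpace ℝ (Fin n)) 1 =>
        ∏ i, (⟪u, (x : EuclideanSpace ℝ (Fin n))⟫ - b i)) ∈ W := by
    rcases Nat.eq_zero_or_pos n with hn | hn
    · subst hn
      have hS : S = ∅ := Finset.eq_empty_of_forall_notMem fun u hu => by
        have h1 := hunit u hu
        rw [Subsingleton.elim u 0] at h1
        simp at h1
      refine ⟨⊥, inferInstance, by simp, ?_⟩
      simp [hS]
    rcases Nat.eq_zero_or_pos t with ht | ht
    · subst ht
      refine ⟨Submodule.span ℝ {fun _ => (1 : ℝ)},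
        FiniteDimensional.span_of_finite ℝ (Set.finite_singleton _), ?_, ?_⟩
      · have h1 : Module.finrank ℝ (Submodule.span ℝ
            ({fun _ => (1 : ℝ)} : Set ((Metric.sphere (0 : EuclideanSpace ℝ (Fin n)) 1) → ℝ)))
            ≤ 1 := by
          rw [← Finset.coe_singleton]
          exact (finrank_span_finset_le_card
            ({fun _ => (1 : ℝ)} : Finset ((Metric.sphere (0 : EuclideanSpace ℝ (Fin n)) 1) → ℝ))).trans
            (by simp)
        have h2 : (n + 0 - 1).choose (n - 1) = 1 := by
          rw [show n + 0 - 1 = n - 1 by omega, Nat.choose_self]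
        omega
      · intro u _
        have he : (fun x : Metric.sphere (0 : EuclideanSpace ℝ (Fin n)) 1 =>
            ∏ i : Fin 0, (⟪u, (x : EuclideanSpace ℝ (Fin n))⟫ - b i)) = fun _ => (1 : ℝ) := by
          funext x; simp
        rw [he]
        exact Submodule.mem_span_singleton_self _
    · set h : Sym (Fin n) t ⊕ Sym (Fin n) (t - 1) →
          (Metric.sphere (0 : EuclideanSpace ℝ (Fin n)) 1) → ℝ := fun z =>
        match z with
        | Sum.inl m => fun x =>
            ((↑m : Multiset (Fin n)).map fun j => (x : EuclideanSpace ℝ (Fin n)) j).prod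
        | Sum.inr m => fun x =>
            ((↑m : Multiset (Fin n)).map fun j => (x : EuclideanSpace ℝ (Fin n)) j).prod
        with hh
      have hgen : ∀ μ : Fin n → ℕ, (∑ j, μ j = t ∨ (1 ≤ t ∧ ∑ j, μ j = t - 1)) →
          stmt14mon n μ ∈ Submodule.span ℝ (Set.range h) := by
        intro μ hμ
        set M : Multiset (Fin n) := Finset.univ.val.bind fun j => Multiset.replicate (μ j) j
          with hM
        have hcard : Multiset.card M = ∑ j, μ j := by
          simp [hM, Multiset.card_bind, Function.comp, List.sum_ofFn]
        have hprod : ∀ x : Metric.sphere (0 : EuclideanSpace ℝ (Fin n)) 1,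
            (M.map fun j => (x : EuclideanSpace ℝ (Fin n)) j).prod = stmt14mon n μ x := by
          intro x
          simp [hM, Multiset.map_bind, Multiset.prod_bind, Multiset.map_replicate,
            Multiset.prod_replicate, stmt14mon, Finset.prod_eq_multiset_prod]
        rcases hμ with hμ | hμ
        · exact Submodule.subset_span ⟨Sum.inl ⟨M, hcard.trans hμ⟩, funext fun x => hprod x⟩
        · exact Submodule.subset_span ⟨Sum.inr ⟨M, hcard.trans hμ.2⟩, funext fun x => hprod x⟩
      refine ⟨Submodule.span ℝ (Set.range h),
        FiniteDimensional.span_of_finite ℝ (Set.finite_range h), ?_, ?_⟩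
      · have hr : Module.finrank ℝ (Submodule.span ℝ (Set.range h)) ≤
            Fintype.card (Sym (Fin n) t ⊕ Sym (Fin n) (t - 1)) :=
          finrank_range_le_card h
        have hc : Fintype.card (Sym (Fin n) t ⊕ Sym (Fin n) (t - 1)) =
            (n + t - 1).choose t + (n + (t - 1) - 1).choose (t - 1) := by
          rw [Fintype.card_sum, Sym.card_sym_eq_choose, Sym.card_sym_eq_choose,
            Fintype.card_fin]
        have e1 : (n + t - 1).choose t = (n + t - 1).choose (n - 1) := by
          rw [← Nat.choose_symm (by omega : t ≤ n + t - 1)]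
          congr 1
          omega
        have e2 : (n + (t - 1) - 1).choose (t - 1) = (n + t - 2).choose (n - 1) := by
          rw [show n + (t - 1) - 1 = n + t - 2 by omega,
            ← Nat.choose_symm (by omega : t - 1 ≤ n + t - 2)]
          congr 1
          omega
        rw [hc, e1, e2] at hr
        exact hr
      · intro u hu
        obtain ⟨p, hdeg, hev⟩ := part2 u hu
        have he : (fun x : Metric.sphere (0 : EuclideanSpace ℝ (Fin n)) 1 =>
            ∏ i, (⟪u, (x : EuclideanSpace ℝ (Fin n))⟫ - b i)) =
            fun x : Metric.sphere (0 : EuclideanSpace ℝ (Fin n)) 1 =>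
              MvPolynomial.eval (fun i => (x : EuclideanSpace ℝ (Fin n)) i) p := by
          funext x; exact (hev _).symm
        rw [he]
        exact stmt14_poly n t _ hgen p hdeg
  obtain ⟨W, hfd, hrk, hmem⟩ := part3
  refine ⟨li, part2, ⟨W, hrk, hmem⟩, ?_⟩
  haveI := hfd
  have li2 : LinearIndependent ℝ (fun u : S =>
      (⟨_, hmem (u : EuclideanSpace ℝ (Fin n)) u.2⟩ : W)) := by
    apply LinearIndependent.of_comp W.subtype
    exact li
  have hcard := li2.fintype_card_le_finrank
  calc S.card = Fintype.card S := (Fintype.card_coe S).symm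
    _ ≤ Module.finrank ℝ W := hcard
    _ ≤ (n + t - 1).choose (n - 1) + (n + t - 2).choose (n - 1) := hrk
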